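/- If each of G_1 and G_2 is θ_{k+1}-immersion free, then any (≤k)-edge sum of G_1 and G_2 is θ_{k+1}-immersion free. -/

import Mathlib

/-- A walk in a multigraph given by its endpoint function `ends`:
`IsWalk ends u w l` means `l` is the list of edges of a walk from `u` to `w`. -/
inductive IsWalk {V E : Type*} (ends : E → Sym2 V) : V → V → List E → Prop
  | nil (v : V) : IsWalk ends v v []
  | cons {u v w : V} {e : E} {l : List E} :
      ends e = s(u, v) → IsWalk ends v w l → IsWalk ends u w (e :: l)

/-- `EdgeSep ends s x S A` : the edge set `A` meets every walk of length at most `s`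
from `x` to a vertex of `S`. -/
def EdgeSep {V E : Type*} (ends : E → Sym2 V) (s : ℕ∞) (x : V) (S : Set V) (A : Set E) : Prop :=
  ∀ y ∈ S, ∀ l : List E, IsWalk ends x y l → (l.length : ℕ∞) ≤ s → ∃ e ∈ l, e ∈ A

/-- A `(k,s)`-edge-hide-out: every edge set separating a vertex `x ∈ R` from `R \ {x}`
(at distance `s`) has at least `k` edges. -/
def IsHideout {V E : Type*} (ends : E → Sym2 V) (s : ℕ∞) (k : ℕ) (R : Set V) : Prop :=
  ∀ x ∈ R, ∀ A : Set E, EdgeSep ends s x (R \ {x}) A → k ≤ A.ncard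

/-- `G` admits a layout of `s`-edge-degeneracy at most `k`. -/
def LayoutWidthLE {V E : Type*} (ends : E → Sym2 V) (s : ℕ∞) (k : ℕ) : Prop :=
  ∃ (n : ℕ) (L : Fin n ≃ V), ∀ i : Fin n,
    ∃ A : Set E, A.ncard ≤ k ∧ EdgeSep ends s (L i) {v | ∃ j, j < i ∧ L j = v} A

/-- The `s`-edge-degeneracy `δ_e^s(G)`. -/
noncomputable def edgeDeg {V E : Type*} (ends : E → Sym2 V) (s : ℕ∞) : ℕ :=
  sInf {k | LayoutWidthLE ends s k}

/-- The edge-degree of a vertex (parallel edges counted with multiplicity). -/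
noncomputable def degE {V E : Type*} (ends : E → Sym2 V) (v : V) : ℕ :=
  {e : E | v ∈ ends e}.ncard
/-- The multigraph `θ_k`: two vertices joined by `k` parallel edges. -/
def thetaEnds (k : ℕ) : Fin k → Sym2 (Fin 2) := fun _ => s(0, 1)

/-- `H` is an immersion of `G`: an injection of the vertices of `H` into those of `G`
together with pairwise edge-disjoint trails of `G` realizing the edges of `H`. -/
def Immersion {V' E' V E : Type*} (ends' : E' → Sym2 V') (ends : E → Sym2 V) : Prop :=
  ∃ (φ : V' ↪ V) (P : E' → List E),
    (∀ e : E', ∃ u v : V', ends' e = s(u, v) ∧ IsWalk ends (φ u) (φ v) (P e) ∧ (P e).Nodup) ∧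
    ∀ e f : E', e ≠ f → ∀ x ∈ P e, x ∉ P f

/-- Restrict a `Sym2` to a subtype, given that both elements satisfy the predicate. -/
noncomputable def sym2Restrict {α : Type*} {P : α → Prop} (p : Sym2 α) (h : ∀ a ∈ p, P a) :
    Sym2 {a // P a} :=
  s(⟨p.out.1, h _ (Sym2.out_fst_mem p)⟩, ⟨p.out.2, h _ (Sym2.out_snd_mem p)⟩)

/-- The endpoint of an edge incident to `v` other than `v` (well defined for loopless graphs). -/
noncomputable def otherEnd {V E : Type*} (ends : E → Sym2 V)
    (hl : ∀ e, ¬ (ends e).IsDiag) (v : V) (e : {e : E // v ∈ ends e}) : {u : V // u ≠ v} :=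
  ⟨Sym2.Mem.other e.2, Sym2.other_ne (hl e.1) e.2⟩

/-- The endpoint function of the `k'`-edge sum of `G₁` and `G₂` on `v₁` and `v₂` with
respect to the bijection `σ` between the edges incident to `v₁` and those incident to `v₂`:
the identified vertex is deleted and each pair `e, σ e` of incident edges is lifted to a
single new edge. -/
noncomputable def edgeSumEnds {V₁ E₁ V₂ E₂ : Type*}
    (ends₁ : E₁ → Sym2 V₁) (ends₂ : E₂ → Sym2 V₂)
    (hl₁ : ∀ e, ¬ (ends₁ e).IsDiag) (hl₂ : ∀ e, ¬ (ends₂ e).IsDiag)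
    (v₁ : V₁) (v₂ : V₂)
    (σ : {e : E₁ // v₁ ∈ ends₁ e} ≃ {e : E₂ // v₂ ∈ ends₂ e}) :
    ({e : E₁ // v₁ ∉ ends₁ e} ⊕ {e : E₂ // v₂ ∉ ends₂ e} ⊕ {e : E₁ // v₁ ∈ ends₁ e}) →
      Sym2 ({u : V₁ // u ≠ v₁} ⊕ {u : V₂ // u ≠ v₂})
  | Sum.inl e => (sym2Restrict (P := fun a => a ≠ v₁) (ends₁ e.1)
      (fun a ha hav => e.2 (hav ▸ ha))).map Sum.inl
  | Sum.inr (Sum.inl e) => (sym2Restrict (P := fun a => a ≠ v₂) (ends₂ e.1)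
      (fun a ha hav => e.2 (hav ▸ ha))).map Sum.inr
  | Sum.inr (Sum.inr e) =>
      s(Sum.inl (otherEnd ends₁ hl₁ v₁ e), Sum.inr (otherEnd ends₂ hl₂ v₂ (σ e)))

/-- The endpoint function of the disjoint union of `G₁` and `G₂`. -/
def disjUnionEnds {V₁ E₁ V₂ E₂ : Type*} (ends₁ : E₁ → Sym2 V₁) (ends₂ : E₂ → Sym2 V₂) :
    E₁ ⊕ E₂ → Sym2 (V₁ ⊕ V₂) :=
  Sum.elim (fun e => (ends₁ e).map Sum.inl) (fun e => (ends₂ e).map Sum.inr)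

-- ====== auxiliary lemmas ======

lemma sym2_map_eq' {α β : Type*} {g : α → β} {p : Sym2 α} {x y : β}
    (h : Sym2.map g p = s(x, y)) : ∃ u v, p = s(u, v) ∧ g u = x ∧ g v = y := by
  induction p using Sym2.ind with
  | _ u v =>
    rw [Sym2.map_pair_eq, Sym2.eq_iff] at h
    rcases h with ⟨h1, h2⟩ | ⟨h1, h2⟩
    · exact ⟨u, v, rfl, h1, h2⟩
    · exact ⟨v, u, Sym2.eq_swap, h2, h1⟩

lemma sym2Restrict_eq {α : Type*} {P : α → Prop} {p : Sym2 α} {h : ∀ a ∈ p, P a}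
    {u v : {a // P a}} (he : sym2Restrict p h = s(u, v)) : p = s(u.1, v.1) := by
  unfold sym2Restrict at he
  rw [Sym2.eq_iff] at he
  have hp : s(p.out.1, p.out.2) = p := Quot.out_eq p
  rcases he with ⟨h1, h2⟩ | ⟨h1, h2⟩ <;> subst h1 <;> subst h2
  · exact hp.symm
  · exact hp.symm.trans Sym2.eq_swap

lemma immersion_push {k : ℕ} {V E V' E' : Type*} {endsG : E → Sym2 V} {endsH : E' → Sym2 V'}
    {g : E → Option E'} (ginj : ∀ f f' x, g f = some x → g f' = some x → f = f')
    {t : V → V'}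
    (hwalk : ∀ a b l, IsWalk endsG a b l → IsWalk endsH (t a) (t b) (l.filterMap g))
    {φ : Fin 2 ↪ V} {P : Fin (k + 1) → List E}
    (hP : ∀ e, ∃ u v, thetaEnds (k + 1) e = s(u, v) ∧ IsWalk endsG (φ u) (φ v) (P e)
      ∧ (P e).Nodup)
    (hdisj : ∀ e f, e ≠ f → ∀ x ∈ P e, x ∉ P f)
    (hne : t (φ 0) ≠ t (φ 1)) :
    Immersion (thetaEnds (k + 1)) endsH := by
  have htinj : Function.Injective (t ∘ φ) := by
    have h2 : ∀ i : Fin 2, i = 0 ∨ i = 1 := by decide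
    intro i j hij
    rcases h2 i with rfl | rfl <;> rcases h2 j with rfl | rfl
    · rfl
    · exact absurd hij hne
    · exact absurd hij.symm hne
    · rfl
  refine ⟨⟨t ∘ φ, htinj⟩, fun e => (P e).filterMap g, ?_, ?_⟩
  · intro e
    obtain ⟨u, v, hs, hw, hnd⟩ := hP e
    exact ⟨u, v, hs, hwalk _ _ _ hw,
      hnd.filterMap fun a a' b hb hb' => ginj a a' b hb hb'⟩
  · intro e f hef x hxe hxf
    rw [List.mem_filterMap] at hxe hxf
    obtain ⟨a, ha, hga⟩ := hxe
    obtain ⟨b, hb, hgb⟩ := hxf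
    exact hdisj e f hef a ha (ginj a b x hga hgb ▸ hb)

section ES
variable {V₁ E₁ V₂ E₂ : Type*} {ends₁ : E₁ → Sym2 V₁} {ends₂ : E₂ → Sym2 V₂}
  (hl₁ : ∀ e, ¬ (ends₁ e).IsDiag) (hl₂ : ∀ e, ¬ (ends₂ e).IsDiag)
  (v₁ : V₁) (v₂ : V₂) (σ : {e : E₁ // v₁ ∈ ends₁ e} ≃ {e : E₂ // v₂ ∈ ends₂ e})

def projES₁ {v₁ : V₁} {v₂ : V₂} :
    ({e : E₁ // v₁ ∉ ends₁ e} ⊕ {e : E₂ // v₂ ∉ ends₂ e} ⊕ {e : E₁ // v₁ ∈ ends₁ e})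
    → Option E₁
  | Sum.inl e => some e.1
  | Sum.inr (Sum.inl _) => none
  | Sum.inr (Sum.inr e) => some e.1

noncomputable def projES₂ {v₁ : V₁} {v₂ : V₂}
    (σ : {e : E₁ // v₁ ∈ ends₁ e} ≃ {e : E₂ // v₂ ∈ ends₂ e}) :
    ({e : E₁ // v₁ ∉ ends₁ e} ⊕ {e : E₂ // v₂ ∉ ends₂ e} ⊕ {e : E₁ // v₁ ∈ ends₁ e})
    → Option E₂
  | Sum.inl _ => none
  | Sum.inr (Sum.inl e) => some e.1
  | Sum.inr (Sum.inr e) => some (σ e).1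

lemma projES₁_inj : ∀ f f' x, projES₁ (ends₁ := ends₁) (ends₂ := ends₂) (v₁ := v₁) (v₂ := v₂) f = some x →
    projES₁ f' = some x → f = f' := by
  rintro (e | e | e) (e' | e' | e') x h h' <;>
    simp only [projES₁, Option.some.injEq, reduceCtorEq] at h h'
  · exact congrArg Sum.inl (Subtype.ext (h.trans h'.symm))
  · exact absurd (by rw [h.trans h'.symm]; exact e'.2) e.2
  · exact absurd (by rw [h'.trans h.symm]; exact e.2) e'.2
  · exact congrArg (Sum.inr ∘ Sum.inr) (Subtype.ext (h.trans h'.symm))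

lemma projES₂_inj : ∀ f f' x, projES₂ (v₁ := v₁) σ f = some x →
    projES₂ σ f' = some x → f = f' := by
  rintro (e | e | e) (e' | e' | e') x h h' <;>
    simp only [projES₂, Option.some.injEq, reduceCtorEq] at h h'
  · exact congrArg (Sum.inr ∘ Sum.inl) (Subtype.ext (h.trans h'.symm))
  · exact absurd (by rw [h.trans h'.symm]; exact (σ e').2) e.2
  · exact absurd (by rw [h'.trans h.symm]; exact (σ e).2) e'.2
  · exact congrArg (Sum.inr ∘ Sum.inr) (σ.injective (Subtype.ext (h.trans h'.symm)))

lemma walk_projES₁ : ∀ a b l, IsWalk (edgeSumEnds ends₁ ends₂ hl₁ hl₂ v₁ v₂ σ) a b l →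
    IsWalk ends₁ (Sum.elim Subtype.val (fun _ => v₁) a) (Sum.elim Subtype.val (fun _ => v₁) b)
      (l.filterMap (projES₁)) := by
  intro a b l h
  induction h with
  | nil v => exact IsWalk.nil _
  | @cons u c w f l he hw ih =>
    rcases f with e | e | e
    · simp only [edgeSumEnds] at he
      obtain ⟨x, y, hres, hx, hy⟩ := sym2_map_eq' he
      subst hx; subst hy
      have hxy := sym2Restrict_eq hres
      simpa only [List.filterMap_cons, projES₁, Sum.elim_inl] using
        IsWalk.cons hxy (by simpa using ih)
    · simp only [edgeSumEnds] at he
      obtain ⟨x, y, _, hx, hy⟩ := sym2_map_eq' he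
      subst hx; subst hy
      simpa only [List.filterMap_cons, projES₁, Sum.elim_inr] using (by simpa using ih)
    · simp only [edgeSumEnds] at he
      rw [Sym2.eq_iff] at he
      have hsp : s(v₁, Sym2.Mem.other e.2) = ends₁ e.1 := Sym2.other_spec e.2
      rcases he with ⟨h1, h2⟩ | ⟨h1, h2⟩ <;> subst h1 <;> subst h2
      · exact (by simpa only [List.filterMap_cons, projES₁, Sum.elim_inl, otherEnd] using
          IsWalk.cons (hsp.symm.trans Sym2.eq_swap) (by simpa using ih))
      · exact (by simpa only [List.filterMap_cons, projES₁, Sum.elim_inr] using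
          IsWalk.cons hsp.symm (by simpa [otherEnd] using ih))

lemma walk_projES₂ : ∀ a b l, IsWalk (edgeSumEnds ends₁ ends₂ hl₁ hl₂ v₁ v₂ σ) a b l →
    IsWalk ends₂ (Sum.elim (fun _ => v₂) Subtype.val a) (Sum.elim (fun _ => v₂) Subtype.val b)
      (l.filterMap (projES₂ σ)) := by
  intro a b l h
  induction h with
  | nil v => exact IsWalk.nil _
  | @cons u c w f l he hw ih =>
    rcases f with e | e | e
    · simp only [edgeSumEnds] at he
      obtain ⟨x, y, _, hx, hy⟩ := sym2_map_eq' he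
      subst hx; subst hy
      simpa only [List.filterMap_cons, projES₂, Sum.elim_inl] using (by simpa using ih)
    · simp only [edgeSumEnds] at he
      obtain ⟨x, y, hres, hx, hy⟩ := sym2_map_eq' he
      subst hx; subst hy
      have hxy := sym2Restrict_eq hres
      simpa only [List.filterMap_cons, projES₂, Sum.elim_inr] using
        IsWalk.cons hxy (by simpa using ih)
    · simp only [edgeSumEnds] at he
      rw [Sym2.eq_iff] at he
      have hsp : s(v₂, Sym2.Mem.other (σ e).2) = ends₂ (σ e).1 := Sym2.other_spec (σ e).2
      rcases he with ⟨h1, h2⟩ | ⟨h1, h2⟩ <;> subst h1 <;> subst h2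
      · exact (by simpa only [List.filterMap_cons, projES₂, Sum.elim_inl] using
          IsWalk.cons hsp.symm (by simpa [otherEnd] using ih))
      · exact (by simpa only [List.filterMap_cons, projES₂, Sum.elim_inr, otherEnd] using
          IsWalk.cons (hsp.symm.trans Sym2.eq_swap) (by simpa using ih))

lemma walk_side_ES {a b l} (h : IsWalk (edgeSumEnds ends₁ ends₂ hl₁ hl₂ v₁ v₂ σ) a b l)
    (hnl : ∀ e : {e : E₁ // v₁ ∈ ends₁ e}, Sum.inr (Sum.inr e) ∉ l) :
    a.isLeft = b.isLeft := by
  induction h with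
  | nil => rfl
  | @cons u c w f l he hw ih =>
    have hnl' : ∀ e, Sum.inr (Sum.inr e) ∉ l :=
      fun e he' => hnl e (List.mem_cons_of_mem _ he')
    rcases f with e | e | e
    · simp only [edgeSumEnds] at he
      obtain ⟨x, y, _, hx, hy⟩ := sym2_map_eq' he
      subst hx; subst hy
      simpa using ih hnl'
    · simp only [edgeSumEnds] at he
      obtain ⟨x, y, _, hx, hy⟩ := sym2_map_eq' he
      subst hx; subst hy
      simpa using ih hnl'
    · exact absurd List.mem_cons_self (hnl e)

end ES

section DU
variable {V₁ E₁ V₂ E₂ : Type*} {ends₁ : E₁ → Sym2 V₁} {ends₂ : E₂ → Sym2 V₂}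

lemma walk_projDU₁ (d : V₁) : ∀ a b l, IsWalk (disjUnionEnds ends₁ ends₂) a b l →
    IsWalk ends₁ (Sum.elim id (fun _ => d) a) (Sum.elim id (fun _ => d) b)
      (l.filterMap (Sum.elim some fun _ => none)) := by
  intro a b l h
  induction h with
  | nil v => exact IsWalk.nil _
  | @cons u c w f l he hw ih =>
    rcases f with e | e
    · simp only [disjUnionEnds, Sum.elim_inl] at he
      obtain ⟨x, y, hxy, hx, hy⟩ := sym2_map_eq' he
      subst hx; subst hy
      simpa only [List.filterMap_cons, Sum.elim_inl, id_eq] using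
        IsWalk.cons hxy (by simpa using ih)
    · simp only [disjUnionEnds, Sum.elim_inr] at he
      obtain ⟨x, y, _, hx, hy⟩ := sym2_map_eq' he
      subst hx; subst hy
      simpa only [List.filterMap_cons, Sum.elim_inr] using (by simpa using ih)

lemma walk_projDU₂ (d : V₂) : ∀ a b l, IsWalk (disjUnionEnds ends₁ ends₂) a b l →
    IsWalk ends₂ (Sum.elim (fun _ => d) id a) (Sum.elim (fun _ => d) id b)
      (l.filterMap (Sum.elim (fun _ => none) some)) := by
  intro a b l h
  induction h with
  | nil v => exact IsWalk.nil _
  | @cons u c w f l he hw ih =>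
    rcases f with e | e
    · simp only [disjUnionEnds, Sum.elim_inl] at he
      obtain ⟨x, y, _, hx, hy⟩ := sym2_map_eq' he
      subst hx; subst hy
      simpa only [List.filterMap_cons, Sum.elim_inl] using (by simpa using ih)
    · simp only [disjUnionEnds, Sum.elim_inr] at he
      obtain ⟨x, y, hxy, hx, hy⟩ := sym2_map_eq' he
      subst hx; subst hy
      simpa only [List.filterMap_cons, Sum.elim_inr, id_eq] using
        IsWalk.cons hxy (by simpa using ih)

lemma walk_side_DU {a b : V₁ ⊕ V₂} {l} (h : IsWalk (disjUnionEnds ends₁ ends₂) a b l) :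
    a.isLeft = b.isLeft := by
  induction h with
  | nil => rfl
  | @cons u c w f l he hw ih =>
    rcases f with e | e <;> simp only [disjUnionEnds, Sum.elim_inl, Sum.elim_inr] at he <;>
      obtain ⟨x, y, _, hx, hy⟩ := sym2_map_eq' he <;> subst hx <;> subst hy <;> simpa using ih

end DU

lemma theta_ends_cases {k : ℕ} {i : Fin k} {u v : Fin 2} (hs : thetaEnds k i = s(u, v)) :
    (u = 0 ∧ v = 1) ∨ (u = 1 ∧ v = 0) := by
  rw [thetaEnds, Sym2.eq_iff] at hs
  rcases hs with ⟨h1, h2⟩ | ⟨h1, h2⟩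
  · exact Or.inl ⟨h1.symm, h2.symm⟩
  · exact Or.inr ⟨h2.symm, h1.symm⟩


/-- a `(≤k)`-edge sum (including a disjoint union) of two
`θ_{k+1}`-immersion-free graphs is `θ_{k+1}`-immersion free. -/
theorem edgeSum_theta_free {V₁ E₁ V₂ E₂ : Type*}
    [Finite V₁] [Finite E₁] [Finite V₂] [Finite E₂]
    (ends₁ : E₁ → Sym2 V₁) (ends₂ : E₂ → Sym2 V₂)
    (hl₁ : ∀ e, ¬ (ends₁ e).IsDiag) (hl₂ : ∀ e, ¬ (ends₂ e).IsDiag)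
    (k : ℕ)
    (hfree₁ : ¬ Immersion (thetaEnds (k + 1)) ends₁)
    (hfree₂ : ¬ Immersion (thetaEnds (k + 1)) ends₂) :
    (∀ (v₁ : V₁) (v₂ : V₂) (σ : {e : E₁ // v₁ ∈ ends₁ e} ≃ {e : E₂ // v₂ ∈ ends₂ e}),
      Nat.card {e : E₁ // v₁ ∈ ends₁ e} ≤ k →
      ¬ Immersion (thetaEnds (k + 1)) (edgeSumEnds ends₁ ends₂ hl₁ hl₂ v₁ v₂ σ)) ∧
    ¬ Immersion (thetaEnds (k + 1)) (disjUnionEnds ends₁ ends₂) := by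
  constructor
  · rintro v₁ v₂ σ hdeg ⟨φ, P, hP, hdisj⟩
    have hφne : φ 0 ≠ φ 1 := φ.injective.ne (by decide)
    rcases hφ0 : φ 0 with x | x <;> rcases hφ1 : φ 1 with y | y
    · apply hfree₁
      refine immersion_push (projES₁_inj v₁ v₂) (walk_projES₁ hl₁ hl₂ v₁ v₂ σ) hP hdisj ?_
      rw [hφ0, hφ1] at hφne ⊢
      simp only [Sum.elim_inl]
      exact fun hc => hφne (congrArg Sum.inl (Subtype.ext hc))
    · -- mixed: each trail uses a lifted edge
      have hlift : ∀ i : Fin (k + 1), ∃ e : {e : E₁ // v₁ ∈ ends₁ e},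
          Sum.inr (Sum.inr e) ∈ P i := by
        intro i
        by_contra hc
        push_neg at hc
        obtain ⟨u, v, hs, hw, -⟩ := hP i
        have hside := walk_side_ES hl₁ hl₂ v₁ v₂ σ hw hc
        rcases theta_ends_cases hs with ⟨rfl, rfl⟩ | ⟨rfl, rfl⟩ <;>
          rw [hφ0, hφ1] at hside <;> simp at hside
      choose ε hε using hlift
      have hεinj : Function.Injective ε := by
        intro i j hij
        by_contra hne
        exact hdisj i j hne _ (hε i) (by rw [hij]; exact hε j)
      have hcard := Nat.card_le_card_of_injective ε hεinj
      have hfin : Nat.card (Fin (k + 1)) = k + 1 := by simp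
      omega
    · -- mixed the other way
      have hlift : ∀ i : Fin (k + 1), ∃ e : {e : E₁ // v₁ ∈ ends₁ e},
          Sum.inr (Sum.inr e) ∈ P i := by
        intro i
        by_contra hc
        push_neg at hc
        obtain ⟨u, v, hs, hw, -⟩ := hP i
        have hside := walk_side_ES hl₁ hl₂ v₁ v₂ σ hw hc
        rcases theta_ends_cases hs with ⟨rfl, rfl⟩ | ⟨rfl, rfl⟩ <;>
          rw [hφ0, hφ1] at hside <;> simp at hside
      choose ε hε using hlift
      have hεinj : Function.Injective ε := by
        intro i j hij
        by_contra hne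
        exact hdisj i j hne _ (hε i) (by rw [hij]; exact hε j)
      have hcard := Nat.card_le_card_of_injective ε hεinj
      have hfin : Nat.card (Fin (k + 1)) = k + 1 := by simp
      omega
    · apply hfree₂
      refine immersion_push (projES₂_inj v₁ v₂ σ) (walk_projES₂ hl₁ hl₂ v₁ v₂ σ) hP hdisj ?_
      rw [hφ0, hφ1] at hφne ⊢
      simp only [Sum.elim_inr]
      exact fun hc => hφne (congrArg Sum.inr (Subtype.ext hc))
  · rintro ⟨φ, P, hP, hdisj⟩
    have hφne : φ 0 ≠ φ 1 := φ.injective.ne (by decide)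
    rcases hφ0 : φ 0 with x | x <;> rcases hφ1 : φ 1 with y | y
    · apply hfree₁
      refine immersion_push ?_ (walk_projDU₁ x) hP hdisj ?_
      · rintro (e | e) (e' | e') z h h' <;>
          simp only [Sum.elim_inl, Sum.elim_inr, Option.some.injEq, reduceCtorEq] at h h'
        exact congrArg Sum.inl (h.trans h'.symm)
      · rw [hφ0, hφ1] at hφne ⊢
        simp only [Sum.elim_inl, id_eq]
        exact fun hc => hφne (congrArg Sum.inl hc)
    · obtain ⟨u, v, hs, hw, -⟩ := hP 0
      have hside := walk_side_DU hw
      rcases theta_ends_cases hs with ⟨rfl, rfl⟩ | ⟨rfl, rfl⟩ <;>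
        rw [hφ0, hφ1] at hside <;> simp at hside
    · obtain ⟨u, v, hs, hw, -⟩ := hP 0
      have hside := walk_side_DU hw
      rcases theta_ends_cases hs with ⟨rfl, rfl⟩ | ⟨rfl, rfl⟩ <;>
        rw [hφ0, hφ1] at hside <;> simp at hside
    · apply hfree₂
      refine immersion_push ?_ (walk_projDU₂ x) hP hdisj ?_
      · rintro (e | e) (e' | e') z h h' <;>
          simp only [Sum.elim_inl, Sum.elim_inr, Option.some.injEq, reduceCtorEq] at h h'
        exact congrArg Sum.inr (h.trans h'.symm)
      · rw [hφ0, hφ1] at hφne ⊢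
        simp only [Sum.elim_inr, id_eq]
        exact fun hc => hφne (congrArg Sum.inr hc)
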